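/- Let f, f₀ : X → ℝ be measurable functions with values in [0,1] and η : X → [0,1] measurable, where f₀(x) = 1 whenever 1 - 2η(x) < 0, f₀(x) = 0 whenever 1 - 2η(x) > 0. Let P be a probability measure on X. Then for every v ∈ [0,1], E_P[|(f - f₀)(1 - 2η)|] ≥ v·E_P[|f - f₀|] - v·P(|1 - 2η| < v). -/

import Mathlib

open MeasureTheory

theorem stmt_11 {X : Type*} [MeasurableSpace X] (P : Measure X) [IsProbabilityMeasure P]
    (f f₀ η : X → ℝ)
    (hf : Measurable f) (hf₀ : Measurable f₀) (hη : Measurable η)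
    (hf01 : ∀ x, f x ∈ Set.Icc (0 : ℝ) 1)
    (hf₀01 : ∀ x, f₀ x ∈ Set.Icc (0 : ℝ) 1)
    (hη01 : ∀ x, η x ∈ Set.Icc (0 : ℝ) 1)
    (hBayes1 : ∀ x, 1 - 2 * η x < 0 → f₀ x = 1)
    (hBayes0 : ∀ x, 0 < 1 - 2 * η x → f₀ x = 0)
    (v : ℝ) (hv : v ∈ Set.Icc (0 : ℝ) 1) :
    v * (∫ x, |f x - f₀ x| ∂P) - v * (P {x | |1 - 2 * η x| < v}).toReal
      ≤ ∫ x, |(f x - f₀ x) * (1 - 2 * η x)| ∂P := by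
  obtain ⟨hv0, hv1⟩ := hv
  set S : Set X := {x | |1 - 2 * η x| < v} with hS
  have hSmeas : MeasurableSet S := by
    apply measurableSet_lt
    · exact ((measurable_const.sub (hη.const_mul 2)).abs)
    · exact measurable_const
  have hg1 : ∀ x, |f x - f₀ x| ≤ 1 := by
    intro x
    obtain ⟨h1, h2⟩ := hf01 x
    obtain ⟨h3, h4⟩ := hf₀01 x
    rw [abs_le]; constructor <;> linarith
  have hh1 : ∀ x, |1 - 2 * η x| ≤ 1 := by
    intro x
    obtain ⟨h1, h2⟩ := hη01 x
    rw [abs_le]; constructor <;> linarith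
  -- integrability
  have hi1 : Integrable (fun x => |f x - f₀ x|) P := by
    refine (integrable_const (1:ℝ)).mono' ((hf.sub hf₀).abs.aestronglyMeasurable) ?_
    filter_upwards with x
    rw [Real.norm_eq_abs, abs_abs]; exact hg1 x
  have hi2 : Integrable (fun x => |(f x - f₀ x) * (1 - 2 * η x)|) P := by
    refine (integrable_const (1:ℝ)).mono'
      (((hf.sub hf₀).mul (measurable_const.sub (hη.const_mul 2))).abs.aestronglyMeasurable) ?_
    filter_upwards with x
    rw [Real.norm_eq_abs, abs_abs, abs_mul]
    exact mul_le_one₀ (hg1 x) (abs_nonneg _) (hh1 x)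
  have hi3 : Integrable (fun x => S.indicator (fun _ => v) x) P :=
    (integrable_const v).indicator hSmeas
  have key : ∀ x, v * |f x - f₀ x| - S.indicator (fun _ => v) x
      ≤ |(f x - f₀ x) * (1 - 2 * η x)| := by
    intro x
    rw [abs_mul]
    by_cases hx : x ∈ S
    · rw [Set.indicator_of_mem hx]
      have : v * |f x - f₀ x| ≤ v := by
        calc v * |f x - f₀ x| ≤ v * 1 := by
              exact mul_le_mul_of_nonneg_left (hg1 x) hv0
          _ = v := mul_one v
      have := mul_nonneg (abs_nonneg (f x - f₀ x)) (abs_nonneg (1 - 2 * η x))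
      linarith
    · rw [Set.indicator_of_notMem hx]
      have hvle : v ≤ |1 - 2 * η x| := by
        simp only [hS, Set.mem_setOf_eq, not_lt] at hx
        exact hx
      have := mul_le_mul_of_nonneg_left hvle (abs_nonneg (f x - f₀ x))
      have h0 := abs_nonneg (f x - f₀ x)
      nlinarith
  have hmono : ∫ x, (v * |f x - f₀ x| - S.indicator (fun _ => v) x) ∂P
      ≤ ∫ x, |(f x - f₀ x) * (1 - 2 * η x)| ∂P := by
    apply integral_mono ((hi1.const_mul v).sub hi3) hi2 key
  have heq : ∫ x, (v * |f x - f₀ x| - S.indicator (fun _ => v) x) ∂P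
      = v * (∫ x, |f x - f₀ x| ∂P) - v * (P S).toReal := by
    rw [integral_sub (hi1.const_mul v) hi3, integral_const_mul,
      integral_indicator_const _ hSmeas]
    simp [smul_eq_mul, mul_comm, measureReal_def]
  linarith [hmono, heq.symm.le, heq.le]
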